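/- arXiv:2106.15501 — 2 statements merged into one kernel-verified Lean document; each statement's English description precedes it below -/
import Mathlib

section
/- Let g ∈ ℂ[x,y] be a reduced polynomial whose partial derivatives g_x, g_y form a regular sequence. Then the sequence 0 → R → AR(g) → A(g) → 0 is exact, where the first map sends h to (h·g_y, −h·g_x, 0) and the second map is projection onto the third coordinate. -/
open MvPolynomial

/-- For a reduced `g ∈ ℂ[x,y]` whose partial derivatives form a regular
sequence, the sequence `0 → R → AR(g) → A(g) → 0` is exact, where the first map is
`h ↦ (h·g_y, −h·g_x, 0)` and the second map is projection onto the third coordinate. -/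
theorem affine_syzygy_exact_sequence
    (g : MvPolynomial (Fin 2) ℂ) (hg : Squarefree g)
    (hreg : (pderiv (0 : Fin 2) g ∈ nonZeroDivisors (MvPolynomial (Fin 2) ℂ)) ∧
      (∀ h : MvPolynomial (Fin 2) ℂ,
        pderiv (1 : Fin 2) g * h ∈ Ideal.span {pderiv (0 : Fin 2) g} →
          h ∈ Ideal.span {pderiv (0 : Fin 2) g})) :
    -- the first map lands in AR(g)
    (∀ h : MvPolynomial (Fin 2) ℂ,
      (h * pderiv (1 : Fin 2) g) * pderiv (0 : Fin 2) g +
        (-(h * pderiv (0 : Fin 2) g)) * pderiv (1 : Fin 2) g + 0 * g = 0) ∧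
    -- exactness on the left: the first map is injective
    Function.Injective (fun h : MvPolynomial (Fin 2) ℂ =>
      (h * pderiv (1 : Fin 2) g, -(h * pderiv (0 : Fin 2) g), (0 : MvPolynomial (Fin 2) ℂ))) ∧
    -- the projection maps AR(g) into A(g) = J_g : (g)
    (∀ ρ : MvPolynomial (Fin 2) ℂ × MvPolynomial (Fin 2) ℂ × MvPolynomial (Fin 2) ℂ,
      ρ.1 * pderiv (0 : Fin 2) g + ρ.2.1 * pderiv (1 : Fin 2) g + ρ.2.2 * g = 0 →
      ρ.2.2 * g ∈ Ideal.span {pderiv (0 : Fin 2) g, pderiv (1 : Fin 2) g}) ∧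
    -- exactness in the middle: kernel of the projection = image of the first map
    (∀ ρ : MvPolynomial (Fin 2) ℂ × MvPolynomial (Fin 2) ℂ × MvPolynomial (Fin 2) ℂ,
      ρ.1 * pderiv (0 : Fin 2) g + ρ.2.1 * pderiv (1 : Fin 2) g + ρ.2.2 * g = 0 →
      (ρ.2.2 = 0 ↔ ∃ h : MvPolynomial (Fin 2) ℂ,
        ρ = (h * pderiv (1 : Fin 2) g, -(h * pderiv (0 : Fin 2) g), 0))) ∧
    -- exactness on the right: the projection is surjective onto A(g)
    (∀ γ : MvPolynomial (Fin 2) ℂ,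
      γ * g ∈ Ideal.span {pderiv (0 : Fin 2) g, pderiv (1 : Fin 2) g} →
      ∃ α β : MvPolynomial (Fin 2) ℂ,
        α * pderiv (0 : Fin 2) g + β * pderiv (1 : Fin 2) g + γ * g = 0) := by

  obtain ⟨hx, hy⟩ := hreg
  refine ⟨?_, ?_, ?_, ?_, ?_⟩
  · intro h; ring
  · intro a b hab
    have h2 := congrArg (fun p => p.2.1) hab
    simp only at h2
    have : a * pderiv (0 : Fin 2) g = b * pderiv (0 : Fin 2) g := by linear_combination -h2
    exact mul_cancel_right_mem_nonZeroDivisors hx |>.mp this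
  · intro ρ hρ
    rw [Ideal.mem_span_pair]
    exact ⟨-ρ.1, -ρ.2.1, by linear_combination -hρ⟩
  · intro ρ hρ
    constructor
    · intro h0
      rw [h0] at hρ
      have hβ : ρ.2.1 ∈ Ideal.span {pderiv (0 : Fin 2) g} := by
        apply hy
        rw [Ideal.mem_span_singleton]
        exact ⟨-ρ.1, by linear_combination hρ⟩
      rw [Ideal.mem_span_singleton] at hβ
      obtain ⟨c, hc⟩ := hβ
      refine ⟨-c, ?_⟩
      have hα : ρ.1 * pderiv (0 : Fin 2) g =
          (-c * pderiv (1 : Fin 2) g) * pderiv (0 : Fin 2) g := by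
        linear_combination hρ - pderiv (1 : Fin 2) g * hc
      have h1 : ρ.1 = -c * pderiv (1 : Fin 2) g :=
        mul_cancel_right_mem_nonZeroDivisors hx |>.mp hα
      have h2 : ρ.2.1 = -(-c * pderiv (0 : Fin 2) g) := by linear_combination hc
      exact Prod.ext h1 (Prod.ext h2 h0)
    · rintro ⟨h, rfl⟩; rfl
  · intro γ hγ
    rw [Ideal.mem_span_pair] at hγ
    obtain ⟨a, b, hab⟩ := hγ
    exact ⟨-a, -b, by linear_combination -hab⟩
end

section
/- Let f ∈ ℂ[x,y,z] be homogeneous of degree d not divisible by z, and let g(x,y) = f(x,y,1). If (a,b,c) ∈ AR(f), i.e., a·f_x + b·f_y + c·f_z = 0, then the triple (θ(a) − x·θ(c), θ(b) − y·θ(c), d·θ(c)) lies in AR(g), where θ(u) = u(x,y,1). -/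
open MvPolynomial

noncomputable section

/-- Dehomogenization `θ : ℂ[x,y,z] → ℂ[x,y]`, `u ↦ u(x,y,1)`. -/
def theta (u : MvPolynomial (Fin 3) ℂ) : MvPolynomial (Fin 2) ℂ :=
  aeval ![X 0, X 1, 1] u

lemma theta_add (u v : MvPolynomial (Fin 3) ℂ) : theta (u + v) = theta u + theta v := by
  simp [theta]

lemma theta_mul (u v : MvPolynomial (Fin 3) ℂ) : theta (u * v) = theta u * theta v := by
  simp [theta]

lemma X_mul_pderiv_monomial (i : Fin 3) (s : Fin 3 →₀ ℕ) (r : ℂ) :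
    X i * pderiv i (monomial s r) = (s i) • monomial s r := by
  rw [pderiv_monomial, X, monomial_mul]
  rcases Nat.eq_zero_or_pos (s i) with h | h
  · simp [h]
  · have : Finsupp.single i 1 + (s - Finsupp.single i 1) = s := by
      ext j
      rcases eq_or_ne j i with rfl | hj
      · simp [Finsupp.single_eq_same]; omega
      · simp [Finsupp.single_eq_of_ne' (Ne.symm hj)]
    rw [this, smul_monomial]
    congr 1
    simp [mul_comm, smul_eq_mul]

lemma euler (f : MvPolynomial (Fin 3) ℂ) (d : ℕ) (hf : f.IsHomogeneous d) :
    X 0 * pderiv (0 : Fin 3) f + X 1 * pderiv (1 : Fin 3) f + X 2 * pderiv (2 : Fin 3) f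
      = d • f := by
  conv_lhs => rw [f.as_sum]
  rw [map_sum (pderiv (0 : Fin 3)), map_sum (pderiv (1 : Fin 3)), map_sum (pderiv (2 : Fin 3)),
    Finset.mul_sum, Finset.mul_sum, Finset.mul_sum, ← Finset.sum_add_distrib,
    ← Finset.sum_add_distrib]
  conv_rhs => rw [f.as_sum, Finset.smul_sum]
  refine Finset.sum_congr rfl fun s hs => ?_
  rw [X_mul_pderiv_monomial, X_mul_pderiv_monomial, X_mul_pderiv_monomial,
    ← add_smul, ← add_smul]
  congr 1
  have hc : coeff s f ≠ 0 := mem_support_iff.mp hs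
  have hd : s 0 + s 1 + s 2 = d := by
    have := hf hc
    rw [Finsupp.weight_apply, Finsupp.sum_fintype _ _ (fun _ => by simp)] at this
    simpa [Fin.sum_univ_three] using this
  omega

lemma theta_pderiv (i : Fin 2) (u : MvPolynomial (Fin 3) ℂ) :
    theta (pderiv ((⟨i.val, by omega⟩ : Fin 3)) u) = pderiv i (theta u) := by
  induction u using MvPolynomial.induction_on with
  | C r => simp [theta]
  | add p q hp hq => simp [theta_add, map_add, hp, hq]
  | mul_X p n hp =>
      rw [pderiv_mul, theta_add, theta_mul, theta_mul, theta_mul, pderiv_mul, hp]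
      congr 1
      all_goals
        congr 1
        fin_cases n <;> fin_cases i <;>
          simp [theta, pderiv_X, Pi.single_apply, Fin.ext_iff]

/-- If `f ∈ ℂ[x,y,z]` is homogeneous of degree `d`, not divisible by `z`,
`g(x,y) = f(x,y,1)`, and `(a,b,c) ∈ AR(f)`, then
`(θ(a) − x·θ(c), θ(b) − y·θ(c), d·θ(c)) ∈ AR(g)`. -/
theorem phi_maps_into_ARg (f : MvPolynomial (Fin 3) ℂ) (d : ℕ)
    (hf : f.IsHomogeneous d) (hz : ¬ (X (2 : Fin 3) ∣ f))
    (a b c : MvPolynomial (Fin 3) ℂ)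
    (habc : a * pderiv (0 : Fin 3) f + b * pderiv (1 : Fin 3) f + c * pderiv (2 : Fin 3) f = 0) :
    (theta a - X 0 * theta c) * pderiv (0 : Fin 2) (theta f) +
      (theta b - X 1 * theta c) * pderiv (1 : Fin 2) (theta f) +
      ((d : MvPolynomial (Fin 2) ℂ) * theta c) * theta f = 0 := by
  have hE := congrArg theta (euler f d hf)
  have hA := congrArg theta habc
  have h0 : theta (pderiv (0 : Fin 3) f) = pderiv (0 : Fin 2) (theta f) :=
    theta_pderiv 0 f
  have h1 : theta (pderiv (1 : Fin 3) f) = pderiv (1 : Fin 2) (theta f) :=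
    theta_pderiv 1 f
  have hX0 : theta (X 0) = X 0 := by simp [theta]
  have hX1 : theta (X 1) = X 1 := by simp [theta]
  have hX2 : theta (X 2) = 1 := by simp [theta]
  rw [theta_add, theta_add, theta_mul, theta_mul, theta_mul, hX0, hX1, hX2, h0, h1] at hE
  have hsmul : theta (d • f) = (d : MvPolynomial (Fin 2) ℂ) * theta f := by
    simp [theta, nsmul_eq_mul]
  rw [hsmul] at hE
  rw [theta_add, theta_add, theta_mul, theta_mul, theta_mul, h0, h1] at hA
  have hz1 : theta (0 : MvPolynomial (Fin 3) ℂ) = 0 := by simp [theta]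
  rw [hz1] at hA
  -- From hE : X0 * g_x + X1 * g_y + θ(f_z) = d * g
  -- From hA : θa * g_x + θb * g_y + θc * θ(f_z) = 0
  linear_combination hA - theta c * hE

end
end
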